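/- Let B : ℝ×ℝ → ℝ be C¹ in its first argument, and suppose there is κ > 0 such that 1 + τ²[B(λ,μ) + 2∂_λB(λ,μ)(λ ± √(λμ))] ≥ κ for all λ, μ ≥ 0 and both signs ±. Then for every ψ⁻ ∈ ℂ^N and every ξ ∈ ℂ^N with ξ ≠ 0, the equation f(s) = 1, where f(s) = (1 + τ² B(|sξ − ψ⁻|², |ψ⁻|²))·s, has exactly one real solution s. -/

import Mathlib

open RCLike Filter

theorem stmt15 (N : ℕ) (hN : 1 ≤ N) (τ : ℝ) (hτ : 0 < τ)
    (B : ℝ → ℝ → ℝ) (hB1 : ∀ m : ℝ, ContDiff ℝ 1 (fun l => B l m))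
    (κ : ℝ) (hκ : 0 < κ)
    (hlow : ∀ l m : ℝ, 0 ≤ l → 0 ≤ m →
      κ ≤ 1 + τ ^ 2 * (B l m
          + 2 * deriv (fun x => B x m) l * (l - Real.sqrt (l * m))) ∧
      κ ≤ 1 + τ ^ 2 * (B l m
          + 2 * deriv (fun x => B x m) l * (l + Real.sqrt (l * m))))
    (ψm ξ : EuclideanSpace ℂ (Fin N)) (hξ : ξ ≠ 0) :
    ∃! s : ℝ, (1 + τ ^ 2 * B (‖(s : ℂ) • ξ - ψm‖ ^ 2) (‖ψm‖ ^ 2)) * s = 1 := by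
  set μ : ℝ := ‖ψm‖ ^ 2 with hμdef
  have hμ : 0 ≤ μ := by positivity
  set a : ℝ := re (inner (𝕜 := ℂ) ξ ψm) with hadef
  set g : ℝ → ℝ := fun s => ‖ξ‖ ^ 2 * s ^ 2 - 2 * a * s + μ with hgdef
  -- g s equals the squared norm
  have hg : ∀ s : ℝ, ‖(s : ℂ) • ξ - ψm‖ ^ 2 = g s := by
    intro s
    rw [norm_sub_sq (𝕜 := ℂ)]
    have h1 : ‖(s : ℂ) • ξ‖ ^ 2 = ‖ξ‖ ^ 2 * s ^ 2 := by
      rw [norm_smul]; simp [mul_pow]; ring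
    have h2 : re (inner (𝕜 := ℂ) ((s : ℂ) • ξ) ψm) = s * a := by
      rw [inner_smul_left]
      simp [hadef]
    rw [h1, h2, hgdef]; ring
  have hgnn : ∀ s : ℝ, 0 ≤ g s := fun s => by rw [← hg s]; positivity
  set f : ℝ → ℝ := fun s => (1 + τ ^ 2 * B (g s) μ) * s with hfdef
  set D : ℝ → ℝ := fun s =>
    τ ^ 2 * (deriv (fun x => B x μ) (g s) * (2 * ‖ξ‖ ^ 2 * s - 2 * a)) * s
      + (1 + τ ^ 2 * B (g s) μ) with hDdef
  have hBdiff : Differentiable ℝ (fun x => B x μ) := (hB1 μ).differentiable one_ne_zero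
  have hg' : ∀ s : ℝ, HasDerivAt g (2 * ‖ξ‖ ^ 2 * s - 2 * a) s := by
    intro s
    have h1 : HasDerivAt (fun s : ℝ => ‖ξ‖ ^ 2 * s ^ 2 - 2 * a * s + μ)
        (‖ξ‖ ^ 2 * (2 * s) - 2 * a) s := by
      have := ((hasDerivAt_pow 2 s).const_mul (‖ξ‖ ^ 2)).sub
        ((hasDerivAt_id s).const_mul (2 * a))
      simpa using this.add_const μ
    convert h1 using 1; ring
  have hf : ∀ s : ℝ, HasDerivAt f (D s) s := by
    intro s
    have hB' : HasDerivAt (fun x => B x μ) (deriv (fun x => B x μ) (g s)) (g s) :=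
      (hBdiff (g s)).hasDerivAt
    have hcomp : HasDerivAt (fun s => B (g s) μ)
        (deriv (fun x => B x μ) (g s) * (2 * ‖ξ‖ ^ 2 * s - 2 * a)) s :=
      hB'.comp s (hg' s)
    have := ((hcomp.const_mul (τ ^ 2)).const_add 1).mul (hasDerivAt_id s)
    convert this using 1
    · rfl
    · rfl
    · rfl
    simp only [hDdef, id_eq]
    ring
  -- lower bound on the derivative
  have hD : ∀ s : ℝ, κ ≤ D s := by
    intro s
    set l : ℝ := g s with hldef
    set d : ℝ := deriv (fun x => B x μ) l with hddef
    set r : ℝ := Real.sqrt (l * μ) with hrdef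
    obtain ⟨h1, h2⟩ := hlow l μ (hgnn s) hμ
    -- Cauchy-Schwarz : (s*a - μ)^2 ≤ l * μ
    have hcs : (s * a - μ) ^ 2 ≤ l * μ := by
      have heq : s * a - μ = re (inner (𝕜 := ℂ) ψm ((s : ℂ) • ξ - ψm)) := by
        rw [inner_sub_right, inner_smul_right, map_sub]
        have : re ((s : ℂ) * inner (𝕜 := ℂ) ψm ξ) = s * re (inner (𝕜 := ℂ) ψm ξ) := by
          simp
        rw [this, inner_re_symm, ← hadef]
        have : re (inner (𝕜 := ℂ) ψm ψm) = μ := by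
          rw [hμdef, ← @inner_self_eq_norm_sq ℂ]
        rw [this]
      have hb : |re (inner (𝕜 := ℂ) ψm ((s : ℂ) • ξ - ψm))| ≤ ‖ψm‖ * ‖(s : ℂ) • ξ - ψm‖ :=
        (abs_re_le_norm _).trans (norm_inner_le_norm _ _)
      have hsq := sq_le_sq' (neg_le_of_abs_le hb) (le_of_abs_le hb)
      calc (s * a - μ) ^ 2 = (re (inner (𝕜 := ℂ) ψm ((s : ℂ) • ξ - ψm))) ^ 2 := by rw [heq]
        _ ≤ (‖ψm‖ * ‖(s : ℂ) • ξ - ψm‖) ^ 2 := hsq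
        _ = l * μ := by rw [mul_pow, ← hμdef, hg s, ← hldef]; ring
    have habs : |s * a - μ| ≤ r := Real.abs_le_sqrt hcs
    have hPlow : l - r ≤ ‖ξ‖ ^ 2 * s ^ 2 - a * s := by
      have h := neg_le_of_abs_le habs
      have hl : l = ‖ξ‖ ^ 2 * s ^ 2 - 2 * a * s + μ := rfl
      nlinarith [h]
    have hPhigh : ‖ξ‖ ^ 2 * s ^ 2 - a * s ≤ l + r := by
      have h := le_of_abs_le habs
      have hl : l = ‖ξ‖ ^ 2 * s ^ 2 - 2 * a * s + μ := rfl
      nlinarith [h]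
    have hDeq : D s = 1 + τ ^ 2 * (B l μ + 2 * d * (‖ξ‖ ^ 2 * s ^ 2 - a * s)) := by
      simp only [hDdef, ← hldef, ← hddef]; ring
    rw [hDeq]
    rcases le_or_gt 0 d with hd | hd
    · nlinarith [mul_le_mul_of_nonneg_left hPlow hd, sq_nonneg τ]
    · nlinarith [mul_le_mul_of_nonpos_left hPhigh hd.le, sq_nonneg τ]
  -- strict monotonicity
  have hmono : StrictMono f :=
    strictMono_of_hasDerivAt_pos hf (fun s => lt_of_lt_of_le hκ (hD s))
  -- growth bounds via monotonicity of f s - κ s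
  have haux : Monotone (fun s => f s - κ * s) := by
    apply monotone_of_hasDerivAt_nonneg (f' := fun s => D s - κ)
    · intro s
      exact (hf s).sub ((hasDerivAt_id s).const_mul κ |>.congr_deriv (by ring))
    · intro s
      simp [sub_nonneg, hD s]
  have hcont : Continuous f := continuous_iff_continuousAt.2 fun s => (hf s).continuousAt
  have htop : Tendsto f atTop atTop := by
    apply tendsto_atTop_mono' atTop ?_
      (tendsto_atTop_add_const_left atTop (f 0) (tendsto_id.const_mul_atTop hκ))
    filter_upwards [eventually_ge_atTop (0 : ℝ)] with s hs
    have h2 : f 0 - κ * 0 ≤ f s - κ * s := haux hs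
    simp only [id_eq]
    linarith
  have hbot : Tendsto f atBot atBot := by
    apply tendsto_atBot_mono' atBot ?_
      (tendsto_atBot_add_const_left atBot (f 0) (tendsto_id.const_mul_atBot hκ))
    filter_upwards [eventually_le_atBot (0 : ℝ)] with s hs
    have h2 : f s - κ * s ≤ f 0 - κ * 0 := haux hs
    simp only [id_eq]
    linarith
  obtain ⟨s, hs⟩ := hcont.surjective htop hbot 1
  refine ⟨s, ?_, ?_⟩
  · show (1 + τ ^ 2 * B (‖(s : ℂ) • ξ - ψm‖ ^ 2) μ) * s = 1
    rw [hg s]; exact hs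
  · intro y hy
    apply hmono.injective
    rw [hs]
    have hy' : (1 + τ ^ 2 * B (‖(y : ℂ) • ξ - ψm‖ ^ 2) μ) * y = 1 := hy
    rw [hg y] at hy'
    exact hy'
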